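/- Let X be a complex Banach space, G₀ : X → X a continuous linear map, λ₀ ∈ ℂ and 𝔯 > 0 such that every z ∈ ℂ with |z − λ₀| = 𝔯 belongs to the resolvent set of G₀, and set M := sup_{|z−λ₀|=𝔯} ‖(z·1 − G₀)⁻¹‖. Let B : X → X be a continuous linear map with M·‖B‖ < 1. Then for every z with |z − λ₀| = 𝔯 the operator z·1 − G₀ − B is invertible with (z·1 − G₀ − B)⁻¹ = Σ_{n≥0} (z·1 − G₀)⁻¹ (B (z·1 − G₀)⁻¹)ⁿ (absolutely convergent Neumann series), and the Riesz projections P := (1/2πi)∮_{|z−λ₀|=𝔯} (z·1 − G₀ − B)⁻¹ dz and P₀ := (1/2πi)∮_{|z−λ₀|=𝔯} (z·1 − G₀)⁻¹ dz satisfy ‖P − P₀‖ ≤ 𝔯 M² ‖B‖ / (1 − M‖B‖). -/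

import Mathlib

set_option synthInstance.maxHeartbeats 1000000
set_option maxHeartbeats 1000000

theorem riesz_projection_perturbation
    {X : Type*} [NormedAddCommGroup X] [NormedSpace ℂ X] [CompleteSpace X]
    (G₀ B : X →L[ℂ] X) (l₀ : ℂ) (𝔯 : ℝ) (h𝔯 : 0 < 𝔯)
    (hres : ∀ z : ℂ, ‖z - l₀‖ = 𝔯 → IsUnit (z • (1 : X →L[ℂ] X) - G₀))
    (M : ℝ)
    (hM : M = sSup ((fun z : ℂ => ‖Ring.inverse (z • (1 : X →L[ℂ] X) - G₀)‖) ''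
      Metric.sphere l₀ 𝔯))
    (hB : M * ‖B‖ < 1) :
    (∀ z : ℂ, ‖z - l₀‖ = 𝔯 →
      IsUnit (z • (1 : X →L[ℂ] X) - G₀ - B) ∧
      Summable (fun n : ℕ =>
        ‖Ring.inverse (z • (1 : X →L[ℂ] X) - G₀) ∘L
          (B ∘L Ring.inverse (z • (1 : X →L[ℂ] X) - G₀)) ^ n‖) ∧
      Ring.inverse (z • (1 : X →L[ℂ] X) - G₀ - B)
        = ∑' n : ℕ, Ring.inverse (z • (1 : X →L[ℂ] X) - G₀) ∘L
            (B ∘L Ring.inverse (z • (1 : X →L[ℂ] X) - G₀)) ^ n) ∧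
    ‖((1 / (2 * Real.pi)) • ∫ θ in (0 : ℝ)..(2 * Real.pi),
        ((𝔯 : ℂ) * Complex.exp (θ * Complex.I)) •
          Ring.inverse
            ((l₀ + (𝔯 : ℂ) * Complex.exp (θ * Complex.I)) • (1 : X →L[ℂ] X) - G₀ - B))
      - ((1 / (2 * Real.pi)) • ∫ θ in (0 : ℝ)..(2 * Real.pi),
        ((𝔯 : ℂ) * Complex.exp (θ * Complex.I)) •
          Ring.inverse
            ((l₀ + (𝔯 : ℂ) * Complex.exp (θ * Complex.I)) • (1 : X →L[ℂ] X) - G₀))‖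
      ≤ 𝔯 * M ^ 2 * ‖B‖ / (1 - M * ‖B‖) := by
  have hsph : ∀ z : ℂ, z ∈ Metric.sphere l₀ 𝔯 ↔ ‖z - l₀‖ = 𝔯 := by
    intro z; simp [Metric.mem_sphere, dist_eq_norm]
  have hAcont : Continuous fun z : ℂ => z • (1 : X →L[ℂ] X) - G₀ :=
    (continuous_id.smul continuous_const).sub continuous_const
  have hRat : ∀ z : ℂ, ‖z - l₀‖ = 𝔯 →
      ContinuousAt (fun w : ℂ => Ring.inverse (w • (1 : X →L[ℂ] X) - G₀)) z := by
    intro z hz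
    have h := NormedRing.inverse_continuousAt (hres z hz).unit
    rw [(hres z hz).unit_spec] at h
    exact ContinuousAt.comp (g := Ring.inverse)
      (f := fun w : ℂ => w • (1 : X →L[ℂ] X) - G₀) h hAcont.continuousAt
  have hRcont : ContinuousOn (fun z : ℂ => ‖Ring.inverse (z • (1 : X →L[ℂ] X) - G₀)‖)
      (Metric.sphere l₀ 𝔯) := fun z hz =>
    ((hRat z ((hsph z).1 hz)).norm).continuousWithinAt
  have hbdd : BddAbove ((fun z : ℂ => ‖Ring.inverse (z • (1 : X →L[ℂ] X) - G₀)‖) ''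
      Metric.sphere l₀ 𝔯) :=
    ((isCompact_sphere l₀ 𝔯).image_of_continuousOn hRcont).bddAbove
  have hMle : ∀ z : ℂ, ‖z - l₀‖ = 𝔯 → ‖Ring.inverse (z • (1 : X →L[ℂ] X) - G₀)‖ ≤ M := by
    intro z hz
    rw [hM]
    exact le_csSup hbdd ⟨z, (hsph z).2 hz, rfl⟩
  have hM0 : 0 ≤ M := by
    obtain ⟨z, hz⟩ := (NormedSpace.sphere_nonempty (x := l₀) (r := 𝔯)).2 h𝔯.le
    exact le_trans (norm_nonneg _) (hMle z ((hsph z).1 hz))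
  have hr0 : 0 ≤ M * ‖B‖ := mul_nonneg hM0 (norm_nonneg B)
  have h1r : 0 < 1 - M * ‖B‖ := by linarith
  -- main pointwise statement, with the extra norm bound
  have main : ∀ z : ℂ, ‖z - l₀‖ = 𝔯 →
      (IsUnit (z • (1 : X →L[ℂ] X) - G₀ - B) ∧
      Summable (fun n : ℕ =>
        ‖Ring.inverse (z • (1 : X →L[ℂ] X) - G₀) ∘L
          (B ∘L Ring.inverse (z • (1 : X →L[ℂ] X) - G₀)) ^ n‖) ∧
      Ring.inverse (z • (1 : X →L[ℂ] X) - G₀ - B)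
        = ∑' n : ℕ, Ring.inverse (z • (1 : X →L[ℂ] X) - G₀) ∘L
            (B ∘L Ring.inverse (z • (1 : X →L[ℂ] X) - G₀)) ^ n) ∧
      ‖Ring.inverse (z • (1 : X →L[ℂ] X) - G₀ - B)
        - Ring.inverse (z • (1 : X →L[ℂ] X) - G₀)‖
        ≤ M ^ 2 * ‖B‖ / (1 - M * ‖B‖) := by
    intro z hz
    set A : X →L[ℂ] X := z • (1 : X →L[ℂ] X) - G₀ with hAdef
    set Rz : X →L[ℂ] X := Ring.inverse A with hRzdef
    have hRzM : ‖Rz‖ ≤ M := hMle z hz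
    have ht : ‖B * Rz‖ < 1 := by
      calc ‖B * Rz‖ ≤ ‖B‖ * ‖Rz‖ := norm_mul_le _ _
        _ ≤ ‖B‖ * M := by
            exact mul_le_mul_of_nonneg_left hRzM (norm_nonneg B)
        _ = M * ‖B‖ := mul_comm _ _
        _ < 1 := hB
    set u : (X →L[ℂ] X)ˣ := (hres z hz).unit with hu
    set v : (X →L[ℂ] X)ˣ := Units.oneSub (B * Rz) ht with hv
    have huval : (u : X →L[ℂ] X) = A := (hres z hz).unit_spec
    have hRzA : Rz * A = 1 := Ring.inverse_mul_cancel A (hres z hz)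
    have hvval : (v : X →L[ℂ] X) = 1 - B * Rz := rfl
    have heq : A - B = ((v * u : (X →L[ℂ] X)ˣ) : X →L[ℂ] X) := by
      rw [Units.val_mul, hvval, huval, sub_mul, one_mul, mul_assoc, hRzdef,
        Ring.inverse_mul_cancel A (hres z hz), mul_one]
    have hunit : IsUnit (A - B) := heq ▸ (v * u).isUnit
    have hsumgeo : Summable fun n : ℕ => (B * Rz) ^ n :=
      summable_geometric_of_norm_lt_one ht
    have hvinv : (((v⁻¹ : (X →L[ℂ] X)ˣ)) : X →L[ℂ] X) = ∑' n : ℕ, (B * Rz) ^ n := rfl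
    have huinv : (((u⁻¹ : (X →L[ℂ] X)ˣ)) : X →L[ℂ] X) = Rz := by
      rw [hRzdef, ← huval, Ring.inverse_unit]
    have hinv : Ring.inverse (A - B) = ∑' n : ℕ, Rz * (B * Rz) ^ n := by
      rw [heq, Ring.inverse_unit, mul_inv_rev, Units.val_mul, huinv, hvinv,
        (hsumgeo.tsum_mul_left Rz).symm]
    have htr : ‖B * Rz‖ ≤ M * ‖B‖ := by
      calc ‖B * Rz‖ ≤ ‖B‖ * ‖Rz‖ := norm_mul_le _ _
        _ ≤ ‖B‖ * M := mul_le_mul_of_nonneg_left hRzM (norm_nonneg B)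
        _ = M * ‖B‖ := mul_comm _ _
    have hnorm_le : ∀ n : ℕ, ‖Rz * (B * Rz) ^ n‖ ≤ M * (M * ‖B‖) ^ n := by
      intro n
      rcases Nat.eq_zero_or_pos n with h0 | hpos
      · subst h0; simpa using hRzM
      calc ‖Rz * (B * Rz) ^ n‖ ≤ ‖Rz‖ * ‖(B * Rz) ^ n‖ := norm_mul_le _ _
        _ ≤ ‖Rz‖ * ‖B * Rz‖ ^ n :=
            mul_le_mul_of_nonneg_left (norm_pow_le' _ hpos) (norm_nonneg _)
        _ ≤ M * (M * ‖B‖) ^ n := by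
            apply mul_le_mul hRzM _ (by positivity) hM0
            exact pow_le_pow_left₀ (norm_nonneg _) htr n
    have hgeoR : Summable fun n : ℕ => M * (M * ‖B‖) ^ n :=
      (summable_geometric_of_lt_one hr0 hB).mul_left M
    have hsumnorm : Summable fun n : ℕ => ‖Rz * (B * Rz) ^ n‖ :=
      Summable.of_nonneg_of_le (fun n => norm_nonneg _) hnorm_le hgeoR
    have hRbnorm : ‖Ring.inverse (A - B)‖ ≤ M * (1 - M * ‖B‖)⁻¹ := by
      rw [hinv]
      calc ‖∑' n : ℕ, Rz * (B * Rz) ^ n‖ ≤ ∑' n : ℕ, ‖Rz * (B * Rz) ^ n‖ :=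
            norm_tsum_le_tsum_norm hsumnorm
        _ ≤ ∑' n : ℕ, M * (M * ‖B‖) ^ n := hsumnorm.tsum_le_tsum hnorm_le hgeoR
        _ = M * (1 - M * ‖B‖)⁻¹ := by
            rw [tsum_mul_left, tsum_geometric_of_lt_one hr0 hB]
    have hARz : A * Rz = 1 := Ring.mul_inverse_cancel A (hres z hz)
    have hIAB : Ring.inverse (A - B) * (A - B) = 1 := Ring.inverse_mul_cancel _ hunit
    have hkey : Ring.inverse (A - B) - Rz = Ring.inverse (A - B) * B * Rz := by
      have h1 : A - (A - B) = B := sub_sub_cancel A B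
      have : Ring.inverse (A - B) * B * Rz = Ring.inverse (A - B) - Rz := by
        calc Ring.inverse (A - B) * B * Rz
            = Ring.inverse (A - B) * ((A - (A - B)) * Rz) := by rw [h1, mul_assoc]
          _ = Ring.inverse (A - B) * (A * Rz) -
                Ring.inverse (A - B) * (A - B) * Rz := by
              rw [sub_mul, mul_sub, mul_assoc]
          _ = Ring.inverse (A - B) - Rz := by rw [hARz, hIAB, mul_one, one_mul]
      exact this.symm
    have hbound : ‖Ring.inverse (A - B) - Rz‖ ≤ M ^ 2 * ‖B‖ / (1 - M * ‖B‖) := by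
      rw [hkey]
      calc ‖Ring.inverse (A - B) * B * Rz‖ ≤ ‖Ring.inverse (A - B) * B‖ * ‖Rz‖ :=
            norm_mul_le _ _
        _ ≤ ‖Ring.inverse (A - B)‖ * ‖B‖ * ‖Rz‖ :=
            mul_le_mul_of_nonneg_right (norm_mul_le _ _) (norm_nonneg _)
        _ ≤ M * (1 - M * ‖B‖)⁻¹ * ‖B‖ * M := by
            apply mul_le_mul _ hRzM (norm_nonneg _) (by positivity)
            exact mul_le_mul_of_nonneg_right hRbnorm (norm_nonneg B)
        _ = M ^ 2 * ‖B‖ / (1 - M * ‖B‖) := by field_simp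
    exact ⟨⟨hunit, hsumnorm, hinv⟩, hbound⟩
  refine ⟨fun z hz => (main z hz).1, ?_⟩
  have hπ : 0 < Real.pi := Real.pi_pos
  set C : ℝ := M ^ 2 * ‖B‖ / (1 - M * ‖B‖) with hC
  have hC0 : 0 ≤ C := by positivity
  have hzθ : ∀ θ : ℝ, ‖(l₀ + (𝔯 : ℂ) * Complex.exp (θ * Complex.I)) - l₀‖ = 𝔯 := by
    intro θ
    rw [add_sub_cancel_left]
    simp [map_mul, Complex.norm_exp_ofReal_mul_I,
      Complex.norm_real, abs_of_pos h𝔯]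
  have hzcont : Continuous fun θ : ℝ => l₀ + (𝔯 : ℂ) * Complex.exp (θ * Complex.I) :=
    continuous_const.add (continuous_const.mul
      (Complex.continuous_exp.comp (Complex.continuous_ofReal.mul continuous_const)))
  have hccont : Continuous fun θ : ℝ => (𝔯 : ℂ) * Complex.exp (θ * Complex.I) :=
    continuous_const.mul
      (Complex.continuous_exp.comp (Complex.continuous_ofReal.mul continuous_const))
  have hcont1 : Continuous fun θ : ℝ =>
      Ring.inverse ((l₀ + (𝔯 : ℂ) * Complex.exp (θ * Complex.I)) • (1 : X →L[ℂ] X) - G₀ - B) := by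
    rw [continuous_iff_continuousAt]
    intro θ
    have hu := ((main _ (hzθ θ)).1).1
    have h := NormedRing.inverse_continuousAt hu.unit
    rw [hu.unit_spec] at h
    have hin : ContinuousAt (fun θ : ℝ =>
        (l₀ + (𝔯 : ℂ) * Complex.exp (θ * Complex.I)) • (1 : X →L[ℂ] X) - G₀ - B) θ :=
      ((hAcont.sub continuous_const).comp hzcont).continuousAt
    exact ContinuousAt.comp (g := Ring.inverse)
      (f := fun θ : ℝ =>
        (l₀ + (𝔯 : ℂ) * Complex.exp (θ * Complex.I)) • (1 : X →L[ℂ] X) - G₀ - B) h hin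
  have hcont2 : Continuous fun θ : ℝ =>
      Ring.inverse ((l₀ + (𝔯 : ℂ) * Complex.exp (θ * Complex.I)) • (1 : X →L[ℂ] X) - G₀) := by
    rw [continuous_iff_continuousAt]
    intro θ
    exact ContinuousAt.comp (g := fun w : ℂ => Ring.inverse (w • (1 : X →L[ℂ] X) - G₀))
      (f := fun θ : ℝ => l₀ + (𝔯 : ℂ) * Complex.exp (θ * Complex.I))
      (hRat _ (hzθ θ)) hzcont.continuousAt
  have hint1 : IntervalIntegrable (fun θ : ℝ =>
      ((𝔯 : ℂ) * Complex.exp (θ * Complex.I)) •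
        Ring.inverse ((l₀ + (𝔯 : ℂ) * Complex.exp (θ * Complex.I)) • (1 : X →L[ℂ] X) - G₀ - B))
      MeasureTheory.volume 0 (2 * Real.pi) :=
    (hccont.smul hcont1).intervalIntegrable _ _
  have hint2 : IntervalIntegrable (fun θ : ℝ =>
      ((𝔯 : ℂ) * Complex.exp (θ * Complex.I)) •
        Ring.inverse ((l₀ + (𝔯 : ℂ) * Complex.exp (θ * Complex.I)) • (1 : X →L[ℂ] X) - G₀))
      MeasureTheory.volume 0 (2 * Real.pi) :=
    (hccont.smul hcont2).intervalIntegrable _ _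
  rw [← smul_sub, ← intervalIntegral.integral_sub hint1 hint2]
  have hptwise : ∀ θ ∈ Set.uIoc (0 : ℝ) (2 * Real.pi),
      ‖((𝔯 : ℂ) * Complex.exp (θ * Complex.I)) •
          Ring.inverse ((l₀ + (𝔯 : ℂ) * Complex.exp (θ * Complex.I)) • (1 : X →L[ℂ] X) - G₀ - B)
        - ((𝔯 : ℂ) * Complex.exp (θ * Complex.I)) •
          Ring.inverse ((l₀ + (𝔯 : ℂ) * Complex.exp (θ * Complex.I)) • (1 : X →L[ℂ] X) - G₀)‖
        ≤ 𝔯 * C := by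
    intro θ _
    rw [← smul_sub, norm_smul]
    have h1 : ‖(𝔯 : ℂ) * Complex.exp (θ * Complex.I)‖ = 𝔯 := by
      simp [map_mul, Complex.norm_exp_ofReal_mul_I,
        Complex.norm_real, abs_of_pos h𝔯]
    rw [h1]
    exact mul_le_mul_of_nonneg_left ((main _ (hzθ θ)).2) h𝔯.le
  have hIest := intervalIntegral.norm_integral_le_of_norm_le_const hptwise
  rw [norm_smul]
  have h2π : |2 * Real.pi - 0| = 2 * Real.pi := by
    rw [sub_zero, abs_of_pos (by positivity)]
  rw [h2π] at hIest
  calc ‖(1 / (2 * Real.pi))‖ * ‖_‖ ≤ (1 / (2 * Real.pi)) * (𝔯 * C * (2 * Real.pi)) := by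
        rw [Real.norm_eq_abs, abs_of_pos (by positivity)]
        exact mul_le_mul_of_nonneg_left hIest (by positivity)
    _ = 𝔯 * M ^ 2 * ‖B‖ / (1 - M * ‖B‖) := by
        rw [hC]; field_simp
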